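/- Let S be a union-closed set system on a set Ω with infinite breadth which satisfies Condition (A). Then there exists a spread ℰ in Ω such that S ⊓ join(ℰ) contains the set system T_max(ℰ). -/
import Mathlib


open Set Filter
open scoped Classical

variable {Ω : Type*}

/-- A union-closed set system (concrete semilattice) on `Ω`. -/
def UnionClosed (S : Set (Set Ω)) : Prop := ∀ x ∈ S, ∀ y ∈ S, x ∪ y ∈ S

/-- A finite collection of subsets of `Ω` is incompressible if no proper
subcollection has the same union. -/
def Incompressible (F : Finset (Set Ω)) : Prop :=
  ∀ F' ⊂ F, ⋃₀ (↑F' : Set (Set Ω)) ≠ ⋃₀ (↑F : Set (Set Ω))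

/-- `S` has infinite breadth: incompressible subcollections of every size. -/
def InfiniteBreadth (S : Set (Set Ω)) : Prop :=
  ∀ n : ℕ, ∃ F : Finset (Set Ω), ↑F ⊆ S ∧ F.card = n ∧ Incompressible F

/-- `S` has finite breadth. -/
def FiniteBreadth (S : Set (Set Ω)) : Prop :=
  ∃ N : ℕ, ∀ F : Finset (Set Ω), ↑F ⊆ S → Incompressible F → F.card ≤ N

/-- `S` has breadth at most `m`. -/
def BreadthLE (S : Set (Set Ω)) (m : ℕ) : Prop :=
  ∀ F : Finset (Set Ω), ↑F ⊆ S → Incompressible F → F.card ≤ m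

/-- `S ⊓ a = { x ∩ a : x ∈ S }`. -/
def proj (S : Set (Set Ω)) (a : Set Ω) : Set (Set Ω) := (fun x => x ∩ a) '' S

/-- `S ⊖ a = { x \ a : x ∈ S }`. -/
def ominus (S : Set (Set Ω)) (a : Set Ω) : Set (Set Ω) := (fun x => x \ a) '' S

/-- `S^{−Γ} = { x ∈ S : x ∩ Γ = ∅ }`. -/
def avoid (S : Set (Set Ω)) (Γ : Set Ω) : Set (Set Ω) := {x ∈ S | x ∩ Γ = ∅}

/-- A spread: pairwise disjoint nonempty finite sets with sizes tending to infinity. -/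
def IsSpread (E : ℕ → Set Ω) : Prop :=
  (∀ n, (E n).Finite) ∧ (∀ n, (E n).Nonempty) ∧
  (∀ m n, m ≠ n → Disjoint (E m) (E n)) ∧
  Tendsto (fun n => (E n).ncard) atTop atTop

/-- The join of a spread. -/
def sjoin (E : ℕ → Set Ω) : Set Ω := ⋃ n, E n

/-- The set system `T_max(ℰ)`. -/
def Tmax (E : ℕ → Set Ω) : Set (Set Ω) :=
  {x | ∃ n, ∃ a : Set Ω, a ⊆ E n ∧ a.Nonempty ∧ x = (⋃ k < n, E k) ∪ a}

/-- The set system `T_min(ℰ)`. -/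
def Tmin (E : ℕ → Set Ω) : Set (Set Ω) :=
  {x | ∃ n, ∃ a : Set Ω, a ⊆ E n ∧ a.Nonempty ∧ x = a ∪ ⋃ k > n, E k}

/-- The set system `T_ort(ℰ)`. -/
def Tort (E : ℕ → Set Ω) : Set (Set Ω) :=
  {x | ∃ n, ∃ a : Set Ω, a ⊆ E n ∧ a.Nonempty ∧
        x = (⋃ k < n, E k) ∪ a ∪ ⋃ k > n, E k}

/-- A refinement of a spread. -/
def Refines (F E : ℕ → Set Ω) : Prop :=
  IsSpread F ∧ ∃ g : ℕ → ℕ, Function.Injective g ∧ ∀ j, F j ⊆ E (g j)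

/-- The sequence `a` shatters the spread `E`. -/
def Shatters (a : ℕ → Set Ω) (E : ℕ → Set Ω) : Prop :=
  ∀ (m : ℕ) (y : ℕ → Set Ω), (∀ j < m, y j = a j ∨ y j = (a j)ᶜ) →
    Tendsto (fun n => (E n ∩ ⋂ j < m, y j).ncard) atTop atTop

/-- A finite partition of `Ω`. -/
def IsPartitionC (C : Finset (Set Ω)) : Prop :=
  (∀ c ∈ C, ∀ d ∈ C, c ≠ d → Disjoint c d) ∧ ⋃₀ (↑C : Set (Set Ω)) = univ

/-- `C` colours the spread `E`. -/
def Colours (C : Finset (Set Ω)) (E : ℕ → Set Ω) : Prop :=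
  ∀ c ∈ C, Tendsto (fun n => (c ∩ E n).ncard) atTop atTop

/-- The colouring `C` of the spread `E` is `S`-decisive. -/
def Decisive (S : Set (Set Ω)) (C : Finset (Set Ω)) (E : ℕ → Set Ω) : Prop :=
  ∃ c₀ ∈ C, ∀ x ∈ S, ∃ B : ℕ, ∀ n,
    (x ∩ c₀ ∩ E n).ncard ≤ B ∨ ∃ c ∈ C, (xᶜ ∩ c ∩ E n).ncard ≤ B

/-- `F` halves `D` with respect to `(E n)_{n ∈ N}`. -/
def Halves (F D : Set Ω) (E : ℕ → Set Ω) (N : Set ℕ) : Prop :=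
  Tendsto (fun n => (D ∩ F ∩ E n).ncard) (atTop ⊓ 𝓟 N) atTop ∧
  Tendsto (fun n => ((D \ F) ∩ E n).ncard) (atTop ⊓ 𝓟 N) atTop

/-- `Ew` is a witness of incompressibility for the collection `F`. -/
def IsWitness (F : Finset (Set Ω)) (Ew : Set Ω) : Prop :=
  ∃ w : Set Ω → Ω, (∀ x ∈ F, w x ∈ x ∧ ∀ y ∈ F, y ≠ x → w x ∉ y) ∧
    Ew = w '' (↑F : Set (Set Ω))

/-- Condition (A). -/
def CondA (S : Set (Set Ω)) : Prop :=
  ∀ k : ℕ, ∀ p ∈ insert (∅ : Set Ω) S, InfiniteBreadth (proj S pᶜ) →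
    ∃ F : Finset (Set Ω), ↑F ⊆ ominus S p ∧ F.card = k ∧ Incompressible F ∧
      InfiniteBreadth (proj (ominus S p) (⋃₀ (↑F : Set (Set Ω)))ᶜ)

/-- Condition (B). -/
def CondB (S : Set (Set Ω)) : Prop :=
  ∀ k : ℕ, ∀ c Γ : Set Ω, InfiniteBreadth (proj (avoid S Γ) c) →
    ∃ F : Finset (Set Ω), ↑F ⊆ proj (avoid S Γ) c ∧ F.card = k ∧ Incompressible F ∧
      ∃ Ew : Set Ω, IsWitness F Ew ∧ InfiniteBreadth (proj (avoid S (Γ ∪ Ew)) c)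

/-- Incompressibility in an abstract (sup-)semilattice: the product (sup) over any proper
nonempty subset differs from the product over the whole set. -/
def AIncomp {S : Type*} [SemilatticeSup S] (E : Finset S) : Prop :=
  ∀ E' ⊂ E, ∀ (h' : E'.Nonempty) (h : E.Nonempty), E'.sup' h' id ≠ E.sup' h id

/-- Incompressibility in an abstract meet-semilattice. -/
def AIncompInf {S : Type*} [SemilatticeInf S] (E : Finset S) : Prop :=
  ∀ E' ⊂ E, ∀ (h' : E'.Nonempty) (h : E.Nonempty), E'.inf' h' id ≠ E.inf' h id

/-- The standard spread on ℕ × ℕ: `E0 n = {(n,k) : k ≤ n}` (0-based, |E0 n| = n+1). -/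
def E0 : ℕ → Set (ℕ × ℕ) := fun n => {p | p.1 = n ∧ p.2 ≤ n}


/-- Auxiliary predicate: `p` is a "good" base point for the inductive construction. -/
def GoodP (S : Set (Set Ω)) (p : Set Ω) : Prop :=
  p ∈ insert (∅ : Set Ω) S ∧ InfiniteBreadth (proj S pᶜ)

lemma unionClosed_sUnion {Ω : Type*} (S : Set (Set Ω)) (hS : UnionClosed S) (p : Set Ω) :
    ∀ I : Finset (Set Ω), I.Nonempty → (∀ f ∈ I, p ∪ f ∈ S) → p ∪ ⋃₀ ↑I ∈ S := by
  intro I hne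
  induction hne using Finset.Nonempty.cons_induction with
  | singleton f =>
      intro h
      have h1 := h f (Finset.mem_singleton_self f)
      rwa [Finset.coe_singleton, Set.sUnion_singleton]
  | cons f I hfI hI ih =>
      intro h
      have h1 : p ∪ f ∈ S := h f (Finset.mem_cons_self _ _)
      have h2 : p ∪ ⋃₀ ↑I ∈ S := ih fun g hg => h g (Finset.mem_cons_of_mem hg)
      have heq : p ∪ ⋃₀ ↑(Finset.cons f I hfI) = (p ∪ f) ∪ (p ∪ ⋃₀ ↑I) := by
        rw [Finset.cons_eq_insert, Finset.coe_insert, Set.sUnion_insert,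
          Set.union_union_distrib_left]
      rw [heq]; exact hS _ h1 _ h2

lemma stepG {Ω : Type*} (S : Set (Set Ω)) (hS : UnionClosed S) (hA : CondA S) (k : ℕ)
    (p : Set Ω) (hp : GoodP S p) :
    ∃ q E : Set Ω, GoodP S q ∧ p ⊆ q ∧ E.Finite ∧ E.ncard = k + 1 ∧
      E ∩ p = ∅ ∧ E ⊆ q ∧
      ∀ a ⊆ E, a.Nonempty → ∃ x ∈ S, p ⊆ x ∧ x ⊆ q ∧ x ∩ E = a := by
  classical
  obtain ⟨F, hFsub, hFcard, hFinc, hFib⟩ := hA (k+1) p hp.1 hp.2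
  have hFne : F.Nonempty := Finset.card_pos.mp (by omega)
  -- lifts
  have hlift : ∀ f : Set Ω, ∃ x : Set Ω, f ∈ F → (x ∈ S ∧ x \ p = f) := by
    intro f
    by_cases hf : f ∈ F
    · obtain ⟨x, hxS, hxf⟩ := hFsub hf
      exact ⟨x, fun _ => ⟨hxS, hxf⟩⟩
    · exact ⟨∅, fun h => absurd h hf⟩
  choose L hL using hlift
  have hpf : ∀ f ∈ F, p ∪ f ∈ S := by
    intro f hf
    have h1 := hL f hf
    have h2 : p ∪ f = p ∪ L f := by
      conv_lhs => rw [← h1.2, Set.union_diff_self]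
    rw [h2]
    rcases hp.1 with h | h
    · rw [h, Set.empty_union]; exact h1.1
    · exact hS p h (L f) h1.1
  have hunion : ∀ I : Finset (Set Ω), I.Nonempty → I ⊆ F → p ∪ ⋃₀ ↑I ∈ S :=
    fun I hne hIF => unionClosed_sUnion S hS p I hne (fun f hf => hpf f (hIF hf))
  -- witnesses
  have hwit0 : ∀ f ∈ F, ∃ w, w ∈ f ∧ ∀ g ∈ F, g ≠ f → w ∉ g := by
    intro f hf
    have hss : F.erase f ⊂ F := Finset.erase_ssubset hf
    have hne := hFinc _ hss
    have hsub : ⋃₀ (↑(F.erase f) : Set (Set Ω)) ⊆ ⋃₀ (↑F : Set (Set Ω)) :=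
      Set.sUnion_subset_sUnion (by exact_mod_cast Finset.erase_subset f F)
    have hnsub : ¬ (⋃₀ (↑F : Set (Set Ω)) ⊆ ⋃₀ (↑(F.erase f) : Set (Set Ω))) :=
      fun h => hne (le_antisymm hsub h)
    obtain ⟨w, hwF, hwE⟩ := Set.not_subset.mp hnsub
    obtain ⟨g, hgF, hwg⟩ := hwF
    have hgf : g = f := by
      by_contra hgf
      exact hwE ⟨g, Finset.mem_coe.mpr (Finset.mem_erase.mpr ⟨hgf, Finset.mem_coe.mp hgF⟩), hwg⟩
    refine ⟨w, hgf ▸ hwg, fun g' hg' hg'f hwg' => ?_⟩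
    exact hwE ⟨g', Finset.mem_coe.mpr (Finset.mem_erase.mpr ⟨hg'f, hg'⟩), hwg'⟩
  obtain ⟨f₀, hf₀⟩ := hFne
  obtain ⟨w₀, _, _⟩ := hwit0 f₀ hf₀
  haveI : Nonempty Ω := ⟨w₀⟩
  have hwit : ∀ f : Set Ω, ∃ w : Ω, f ∈ F → (w ∈ f ∧ ∀ g ∈ F, g ≠ f → w ∉ g) := by
    intro f
    by_cases hf : f ∈ F
    · obtain ⟨w, h1, h2⟩ := hwit0 f hf
      exact ⟨w, fun _ => ⟨h1, h2⟩⟩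
    · exact ⟨Classical.arbitrary Ω, fun h => absurd h hf⟩
  choose w hw using hwit
  have hinj : Set.InjOn w ↑F := by
    intro f hf g hg hfg
    by_contra hne'
    exact ((hw g (Finset.mem_coe.mp hg)).2 f (Finset.mem_coe.mp hf) hne')
      (hfg ▸ (hw f (Finset.mem_coe.mp hf)).1)
  refine ⟨p ∪ ⋃₀ ↑F, w '' ↑F, ?_, Set.subset_union_left, (F.finite_toSet.image w), ?_, ?_, ?_, ?_⟩
  · constructor
    · exact Set.mem_insert_of_mem _ (hunion F ⟨f₀, hf₀⟩ Finset.Subset.rfl)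
    · have himg : proj S (p ∪ ⋃₀ (↑F : Set (Set Ω)))ᶜ
          = proj (ominus S p) (⋃₀ (↑F : Set (Set Ω)))ᶜ := by
        unfold proj ominus
        rw [Set.image_image]
        apply Set.image_congr'
        intro x
        ext ω
        simp only [Set.mem_inter_iff, Set.mem_compl_iff, Set.mem_union, Set.mem_diff]
        tauto
      rw [himg]; exact hFib
  · rw [Set.ncard_image_of_injOn hinj, Set.ncard_coe_finset, hFcard]
  · apply Set.eq_empty_iff_forall_notMem.mpr
    rintro ω ⟨⟨f, hf, rfl⟩, hωp⟩
    have h1 : w f ∈ L f \ p := by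
      rw [(hL f (Finset.mem_coe.mp hf)).2]
      exact (hw f (Finset.mem_coe.mp hf)).1
    exact h1.2 hωp
  · rintro ω ⟨f, hf, rfl⟩
    exact Or.inr ⟨f, hf, (hw f (Finset.mem_coe.mp hf)).1⟩
  · intro a haE hane
    set I : Finset (Set Ω) := F.filter (fun f => w f ∈ a) with hI
    have hIF : I ⊆ F := Finset.filter_subset _ _
    have hIne : I.Nonempty := by
      obtain ⟨ω, hω⟩ := hane
      obtain ⟨f, hf, rfl⟩ := haE hω
      exact ⟨f, Finset.mem_filter.mpr ⟨Finset.mem_coe.mp hf, hω⟩⟩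
    refine ⟨p ∪ ⋃₀ ↑I, hunion I hIne hIF, Set.subset_union_left, ?_, ?_⟩
    · exact Set.union_subset_union_right p (Set.sUnion_subset_sUnion (by exact_mod_cast hIF))
    · ext ω
      constructor
      · rintro ⟨hx, hE⟩
        obtain ⟨g, hg, rfl⟩ := hE
        have hgF := Finset.mem_coe.mp hg
        rcases hx with hp' | hx'
        · exfalso
          have h1 : w g ∈ L g \ p := by
            rw [(hL g hgF).2]
            exact (hw g hgF).1
          exact h1.2 hp'
        · obtain ⟨f, hfI, hwf⟩ := Set.mem_sUnion.mp hx'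
          have hfI' : f ∈ I := Finset.mem_coe.mp hfI
          have hfF : f ∈ F := hIF hfI'
          by_cases hgf : g = f
          · subst hgf
            exact (Finset.mem_filter.mp hfI').2
          · exact absurd hwf ((hw g hgF).2 f hfF (fun h => hgf h.symm))
      · intro hω
        obtain ⟨f, hf, rfl⟩ := haE hω
        have hfF := Finset.mem_coe.mp hf
        have hfI : f ∈ I := Finset.mem_filter.mpr ⟨hfF, hω⟩
        exact ⟨Or.inr (Set.mem_sUnion.mpr ⟨f, hfI, (hw f hfF).1⟩), ⟨f, hf, rfl⟩⟩

/-- Infinite breadth plus Condition (A) yields a spread realising `T_max`. -/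
theorem stmt4 {Ω : Type*} (S : Set (Set Ω)) (hS : UnionClosed S)
    (hb : InfiniteBreadth S) (hA : CondA S) :
    ∃ E : ℕ → Set Ω, IsSpread E ∧ Tmax E ⊆ proj S (sjoin E) := by
  classical
  have h0 : GoodP S (∅ : Set Ω) := by
    refine ⟨Set.mem_insert _ _, ?_⟩
    have hps : proj S (∅ : Set Ω)ᶜ = S := by
      simp [proj, Set.compl_empty]
    rwa [hps]
  have step := fun (k : ℕ) (p : Set Ω) (hp : GoodP S p) => stepG S hS hA k p hp
  choose q E hGood hsub hfin hcard hdisj hEq hrep using step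
  let T := {p : Set Ω // GoodP S p}
  let ps : ℕ → T := fun n =>
    Nat.rec (motive := fun _ => T) ⟨∅, h0⟩ (fun n x => ⟨q n x.1 x.2, hGood n x.1 x.2⟩) n
  have hps : ∀ n, (ps (n+1)).1 = q n (ps n).1 (ps n).2 := fun n => rfl
  have pmono : ∀ m n, m ≤ n → (ps m).1 ⊆ (ps n).1 := by
    intro m n h
    induction h with
    | refl => exact subset_rfl
    | step h ih => exact ih.trans (hsub _ (ps _).1 (ps _).2)
  set Es : ℕ → Set Ω := fun n => E n (ps n).1 (ps n).2 with hEs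
  have hEfin : ∀ n, (Es n).Finite := fun n => hfin n _ _
  have hEcard : ∀ n, (Es n).ncard = n + 1 := fun n => hcard n _ _
  have hEp : ∀ n, Es n ∩ (ps n).1 = ∅ := fun n => hdisj n _ _
  have hEq' : ∀ n, Es n ⊆ (ps (n+1)).1 := fun n => hEq n _ _
  have hEne : ∀ n, (Es n).Nonempty := by
    intro n
    apply Set.nonempty_of_ncard_ne_zero
    rw [hEcard]; omega
  have hd : ∀ m n, m < n → Disjoint (Es m) (Es n) := by
    intro m n h
    rw [Set.disjoint_left]
    intro ω hm hn
    have h1 : ω ∈ (ps n).1 := pmono (m+1) n h (hEq' m hm)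
    have h2 : ω ∈ Es n ∩ (ps n).1 := ⟨hn, h1⟩
    rw [hEp n] at h2
    exact h2
  refine ⟨Es, ⟨hEfin, hEne, ?_, ?_⟩, ?_⟩
  · intro m n hmn
    rcases hmn.lt_or_gt with h | h
    · exact hd m n h
    · exact (hd n m h).symm
  · have heqf : (fun n => (Es n).ncard) = fun n => n + 1 := funext hEcard
    rw [heqf]
    exact tendsto_add_atTop_nat 1
  · rintro x ⟨n, a, haE, hane, rfl⟩
    obtain ⟨y, hyS, hpy, hyq, hya⟩ := hrep n (ps n).1 (ps n).2 a haE hane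
    refine ⟨y, hyS, ?_⟩
    ext ω
    simp only [sjoin, Set.mem_inter_iff, Set.mem_iUnion, Set.mem_union]
    constructor
    · rintro ⟨hωy, m, hωm⟩
      rcases lt_trichotomy m n with h | h | h
      · left
        exact ⟨m, h, hωm⟩
      · right
        subst h
        rw [← hya]
        exact ⟨hωy, hωm⟩
      · exfalso
        have h1 : ω ∈ (ps m).1 := pmono (n+1) m h (hyq hωy)
        have h2 : ω ∈ Es m ∩ (ps m).1 := ⟨hωm, h1⟩
        rw [hEp m] at h2
        exact h2
    · rintro (h | h)
      · obtain ⟨k, hk, hωk⟩ := h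
        refine ⟨hpy (pmono (k+1) n hk (hEq' k hωk)), k, hωk⟩
      · rw [← hya] at h
        exact ⟨h.1, n, h.2⟩
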